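/- Let n ≥ 2 and let A be a normal n×n complex matrix with eigenvalues z_1,…,z_n and an orthonormal basis e_1,…,e_n of ℂⁿ with A·e_j = z_j·e_j; let u_1,…,u_n denote the standard basis of ℂⁿ. Then for every 1 ≤ i ≤ n and every z ∈ ℂ \ {z_1,…,z_n}: det(A_{[i]} − z·I_{n−1}) / det(A − z·I_n) = Σ_{j=1}^n |⟨u_i, e_j⟩|² / (z_j − z). In particular, every eigenvalue of A_{[i]} lies in the convex hull of {z_1,…,z_n}. -/

import Mathlib

/-- The embedding `Fin (n-1) → Fin n` skipping the index `i`. -/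
def skipIdx {n : ℕ} (i : Fin n) (j : Fin (n - 1)) : Fin n :=
  if (j : ℕ) < (i : ℕ) then ⟨(j : ℕ), by have := i.isLt; have := j.isLt; omega⟩
  else ⟨(j : ℕ) + 1, by have := j.isLt; omega⟩

/-- The degeneracy one principal submatrix `A_{[i]}` obtained by deleting the `i`-th row
and `i`-th column of `A`. -/
def subDel {n : ℕ} (A : Matrix (Fin n) (Fin n) ℂ) (i : Fin n) :
    Matrix (Fin (n - 1)) (Fin (n - 1)) ℂ :=
  Matrix.of fun j k => A (skipIdx i j) (skipIdx i k)

lemma skipIdx_eq {m : ℕ} (i : Fin (m + 1)) (j : Fin (m + 1 - 1)) :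
    skipIdx i j = i.succAbove j := by
  simp only [skipIdx, Fin.succAbove, Fin.lt_def, Fin.coe_castSucc]
  split <;> rfl

/-- Gauss–Lucas-type theorem for normal matrices: if `A` is normal with orthonormal
eigenbasis `e_1, …, e_n` and eigenvalues `z_1, …, z_n`, then for every `i` and every
`z ∉ {z_1, …, z_n}`,
`det(A_{[i]} - z I_{n-1}) / det(A - z I_n) = ∑_j |⟨u_i, e_j⟩|² / (z_j - z)`;
in particular every eigenvalue of `A_{[i]}` lies in the convex hull of `{z_1, …, z_n}`. -/
theorem gauss_lucas_normal_matrices (n : ℕ) (hn : 2 ≤ n)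
    (A : Matrix (Fin n) (Fin n) ℂ)
    (hA : A * A.conjTranspose = A.conjTranspose * A)
    (z : Fin n → ℂ) (e : Fin n → (Fin n → ℂ))
    (heig : ∀ j, A.mulVec (e j) = z j • e j)
    (hON : ∀ j k, (∑ l, (starRingEnd ℂ) (e j l) * e k l) = if j = k then 1 else 0) :
    ∀ i : Fin n,
      (∀ ζ : ℂ, ζ ∉ Set.range z →
        (subDel A i - ζ • (1 : Matrix (Fin (n - 1)) (Fin (n - 1)) ℂ)).det /
            (A - ζ • (1 : Matrix (Fin n) (Fin n) ℂ)).det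
          = ∑ j, ((‖∑ l, (starRingEnd ℂ) ((Pi.single i (1 : ℂ) : Fin n → ℂ) l) * e j l‖ : ℝ) ^ 2 : ℂ)
              / (z j - ζ)) ∧
      ∀ μ : ℂ, (subDel A i - μ • (1 : Matrix (Fin (n - 1)) (Fin (n - 1)) ℂ)).det = 0 →
        μ ∈ convexHull ℝ (Set.range z) := by
  clear hA
  obtain ⟨m, rfl⟩ : ∃ m, n = m + 1 := ⟨n - 1, by omega⟩
  clear hn
  intro i
  -- orthonormality of the rows of the eigenvector matrix
  have h2 : ∀ k l : Fin (m+1),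
      (∑ j, e j k * (starRingEnd ℂ) (e j l)) = if k = l then (1:ℂ) else 0 := by
    have h1 : Matrix.conjTranspose (Matrix.of fun k j => e j k : Matrix (Fin (m+1)) (Fin (m+1)) ℂ) *
        (Matrix.of fun k j => e j k : Matrix (Fin (m+1)) (Fin (m+1)) ℂ) = 1 := by
      ext j k
      simpa [Matrix.mul_apply, Matrix.conjTranspose_apply, Matrix.one_apply] using hON j k
    have h2' := mul_eq_one_comm.mp h1
    intro k l
    have h3 := congrFun (congrFun h2' k) l
    simpa [Matrix.mul_apply, Matrix.conjTranspose_apply, Matrix.one_apply] using h3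
  have key : ∀ ζ : ℂ, ζ ∉ Set.range z →
      ((A - ζ • (1 : Matrix (Fin (m+1)) (Fin (m+1)) ℂ)).det ≠ 0 ∧
       (subDel A i - ζ • (1 : Matrix (Fin (m+1-1)) (Fin (m+1-1)) ℂ)).det =
         (A - ζ • (1 : Matrix (Fin (m+1)) (Fin (m+1)) ℂ)).det *
           ∑ j, (z j - ζ)⁻¹ * ((Complex.normSq (e j i) : ℝ) : ℂ)) := by
    intro ζ hζ
    have hz0 : ∀ j, z j - ζ ≠ 0 := fun j h => hζ ⟨j, sub_eq_zero.mp h⟩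
    set M := A - ζ • (1 : Matrix (Fin (m+1)) (Fin (m+1)) ℂ) with hM
    set N : Matrix (Fin (m+1)) (Fin (m+1)) ℂ :=
      Matrix.of fun k l => ∑ j, (z j - ζ)⁻¹ * (e j k * (starRingEnd ℂ) (e j l)) with hN
    have hMe : ∀ j, M.mulVec (e j) = (z j - ζ) • e j := by
      intro j
      rw [hM, Matrix.sub_mulVec, heig j, Matrix.smul_mulVec, Matrix.one_mulVec, sub_smul]
    have hMN : M * N = 1 := by
      ext k l
      rw [Matrix.mul_apply]
      have hrow : ∀ j : Fin (m+1), ∑ p, M k p * e j p = (z j - ζ) * e j k := by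
        intro j
        simpa [Matrix.mulVec, dotProduct] using congrFun (hMe j) k
      calc ∑ p, M k p * N p l
          = ∑ p, ∑ j, (z j - ζ)⁻¹ * (starRingEnd ℂ) (e j l) * (M k p * e j p) := by
            refine Finset.sum_congr rfl fun p _ => ?_
            simp only [hN, Matrix.of_apply, Finset.mul_sum]
            exact Finset.sum_congr rfl fun j _ => by ring
        _ = ∑ j, (z j - ζ)⁻¹ * (starRingEnd ℂ) (e j l) * ((z j - ζ) * e j k) := by
            rw [Finset.sum_comm]
            refine Finset.sum_congr rfl fun j _ => ?_
            rw [← Finset.mul_sum, hrow j]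
        _ = ∑ j, e j k * (starRingEnd ℂ) (e j l) := by
            refine Finset.sum_congr rfl fun j _ => ?_
            have h5 : (z j - ζ)⁻¹ * (z j - ζ) = 1 := inv_mul_cancel₀ (hz0 j)
            calc (z j - ζ)⁻¹ * (starRingEnd ℂ) (e j l) * ((z j - ζ) * e j k)
                = (z j - ζ)⁻¹ * (z j - ζ) * (e j k * (starRingEnd ℂ) (e j l)) := by ring
              _ = e j k * (starRingEnd ℂ) (e j l) := by rw [h5, one_mul]
        _ = (1 : Matrix (Fin (m+1)) (Fin (m+1)) ℂ) k l := by
            rw [h2 k l, Matrix.one_apply]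
    have hdet : M.det ≠ 0 := by
      intro h
      have h4 := congrArg Matrix.det hMN
      rw [Matrix.det_mul, h, zero_mul, Matrix.det_one] at h4
      exact zero_ne_one h4
    have hadj : M.adjugate = M.det • N := by
      calc M.adjugate = M.adjugate * (M * N) := by rw [hMN, mul_one]
        _ = (M.adjugate * M) * N := by rw [mul_assoc]
        _ = M.det • N := by rw [Matrix.adjugate_mul, Matrix.smul_mul, Matrix.one_mul]
    have hsub : subDel A i - ζ • (1 : Matrix (Fin (m+1-1)) (Fin (m+1-1)) ℂ)
        = M.submatrix i.succAbove i.succAbove := by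
      ext j k
      by_cases h : j = k
      · subst h
        simp [subDel, skipIdx_eq, hM, Matrix.one_apply]
      · have h' : i.succAbove j ≠ i.succAbove k :=
          fun hh => h (Fin.succAbove_right_injective hh)
        simp [subDel, skipIdx_eq, hM, Matrix.one_apply, h, h']
    have hminor : (subDel A i - ζ • (1 : Matrix (Fin (m+1-1)) (Fin (m+1-1)) ℂ)).det
        = M.adjugate i i := by
      rw [hsub, Matrix.adjugate_fin_succ_eq_det_submatrix,
        Even.neg_one_pow ⟨(i:ℕ), rfl⟩, one_mul]
    refine ⟨hdet, ?_⟩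
    rw [hminor, hadj]
    simp only [Matrix.smul_apply, smul_eq_mul, hN, Matrix.of_apply]
    congr 1
    exact Finset.sum_congr rfl fun j _ => by rw [Complex.mul_conj]
  constructor
  · intro ζ hζ
    obtain ⟨hdet, hnum⟩ := key ζ hζ
    rw [hnum, mul_comm, mul_div_assoc, div_self hdet, mul_one]
    refine Finset.sum_congr rfl fun j _ => ?_
    have hin : (∑ l, (starRingEnd ℂ) ((Pi.single i (1:ℂ) : Fin (m+1) → ℂ) l) * e j l)
        = e j i := by
      rw [Finset.sum_eq_single i]
      · simp
      · intro l _ hl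
        simp [Pi.single_eq_of_ne hl]
      · simp
    rw [hin, ← Complex.ofReal_pow, Complex.sq_norm, div_eq_mul_inv, mul_comm]
  · intro μ hμdet
    by_cases hμ : μ ∈ Set.range z
    · exact subset_convexHull ℝ _ hμ
    obtain ⟨hdet, hnum⟩ := key μ hμ
    have hz0 : ∀ j, z j - μ ≠ 0 := fun j h => hμ ⟨j, sub_eq_zero.mp h⟩
    have hS : (∑ j, (z j - μ)⁻¹ * ((Complex.normSq (e j i) : ℝ) : ℂ)) = 0 := by
      rw [hnum] at hμdet
      exact (mul_eq_zero.mp hμdet).resolve_left hdet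
    set w : Fin (m+1) → ℝ :=
      fun j => Complex.normSq (e j i) / Complex.normSq (z j - μ) with hw
    have hw0 : ∀ j, 0 ≤ w j :=
      fun j => div_nonneg (Complex.normSq_nonneg _) (Complex.normSq_nonneg _)
    have hsum1 : ∑ j, Complex.normSq (e j i) = 1 := by
      have h := h2 i i
      rw [if_pos rfl] at h
      have h' : ((∑ j, Complex.normSq (e j i) : ℝ) : ℂ) = 1 := by
        push_cast
        calc (∑ j, (Complex.normSq (e j i) : ℂ))
            = ∑ j, e j i * (starRingEnd ℂ) (e j i) :=
              Finset.sum_congr rfl fun j _ => (Complex.mul_conj _).symm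
          _ = 1 := h
      exact_mod_cast h'
    have hwpos : 0 < ∑ j, w j := by
      obtain ⟨j, hj⟩ : ∃ j, Complex.normSq (e j i) ≠ 0 := by
        by_contra hc
        push_neg at hc
        rw [Finset.sum_eq_zero (fun j _ => hc j)] at hsum1
        exact one_ne_zero hsum1.symm
      refine Finset.sum_pos' (fun j _ => hw0 j) ⟨j, Finset.mem_univ j, ?_⟩
      exact div_pos ((Complex.normSq_nonneg _).lt_of_ne (Ne.symm hj))
        (Complex.normSq_pos.mpr (hz0 j))
    have hkey : ∑ j, ((w j : ℝ) : ℂ) * (z j - μ) = 0 := by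
      have h3 : ∑ j, ((w j : ℝ) : ℂ) * (starRingEnd ℂ) (z j - μ) = 0 := by
        rw [← hS]
        refine Finset.sum_congr rfl fun j _ => ?_
        have hn0 : ((Complex.normSq (z j - μ) : ℝ) : ℂ) ≠ 0 := by
          exact_mod_cast (Complex.normSq_pos.mpr (hz0 j)).ne'
        rw [Complex.inv_def]
        simp only [hw]
        push_cast
        field_simp
      have h4 := congrArg (starRingEnd ℂ) h3
      simpa [map_sum, map_mul, Complex.conj_ofReal] using h4
    have hsz : ∑ j, w j • z j = (∑ j, w j) • μ := by
      have h6 : ∑ j, ((w j : ℝ) : ℂ) * z j = ∑ j, ((w j : ℝ) : ℂ) * μ := by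
        have h7 := hkey
        simp only [mul_sub] at h7
        rw [Finset.sum_sub_distrib] at h7
        exact sub_eq_zero.mp h7
      calc ∑ j, w j • z j = ∑ j, ((w j : ℝ) : ℂ) * z j :=
            Finset.sum_congr rfl fun j _ => by rw [Complex.real_smul]
        _ = ∑ j, ((w j : ℝ) : ℂ) * μ := h6
        _ = ((∑ j, w j : ℝ) : ℂ) * μ := by push_cast; rw [Finset.sum_mul]
        _ = (∑ j, w j) • μ := by rw [Complex.real_smul]
    have hcm : Finset.univ.centerMass w z = μ := by
      rw [Finset.centerMass, hsz, smul_smul, inv_mul_cancel₀ hwpos.ne', one_smul]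
    have hfin : Finset.univ.centerMass w z ∈ convexHull ℝ (Set.range z) :=
      Finset.centerMass_mem_convexHull Finset.univ (fun j _ => hw0 j) hwpos
        (fun j _ => Set.mem_range_self j)
    rwa [hcm] at hfin
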